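/- For real x with 0 < x < 1, ∑_{n=1}^∞ (H_n^{(2)}/n) x^n = -Li_2(x) log(1-x) - log(x) log^2(1-x) - 2 log(1-x) Li_2(1-x) + 2 Li_3(1-x) - 2 ζ(3) + Li_3(x). -/

import Mathlib

open Real Filter Finset

noncomputable def Li (m : ℕ) (x : ℝ) : ℝ := ∑' n : ℕ, x ^ (n + 1) / (n + 1 : ℝ) ^ m

noncomputable def H (p n : ℕ) : ℝ := ∑ j ∈ Finset.Icc 1 n, 1 / (j : ℝ) ^ p

noncomputable def Hbar (p n : ℕ) : ℝ := ∑ j ∈ Finset.Icc 1 n, (-1 : ℝ) ^ (j - 1) / (j : ℝ) ^ p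

open Topology

lemma H2_nonneg (n : ℕ) : 0 ≤ H 2 n :=
  Finset.sum_nonneg fun j _ => by positivity

lemma H2_le_two : ∀ n : ℕ, H 2 n ≤ 2 := by
  have key : ∀ n : ℕ, 1 ≤ n → H 2 n ≤ 2 - 1 / n := by
    intro n hn
    induction n with
    | zero => omega
    | succ k ih =>
      rcases Nat.eq_or_lt_of_le hn with h | h
      · have hk0 : k = 0 := by omega
        subst hk0
        norm_num [H]
      · have hk : 1 ≤ k := by omega
        have : H 2 (k+1) = H 2 k + 1 / ((k:ℝ)+1) ^ 2 := by
          rw [H, H, Finset.sum_Icc_succ_top (by omega)]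
          push_cast; ring_nf
        rw [this]
        have hkpos : (0:ℝ) < k := by exact_mod_cast hk
        have h1 : 1 / ((k:ℝ)+1) ^ 2 ≤ 1 / k - 1 / (k+1) := by
          rw [div_sub_div _ _ (ne_of_gt hkpos) (by positivity)]
          rw [div_le_div_iff₀ (by positivity) (by positivity)]
          ring_nf; nlinarith
        have := ih hk
        push_cast
        linarith
  intro n
  rcases Nat.eq_zero_or_pos n with h | h
  · simp [h, H]
  · have h1 := key n h
    have h2 : (0:ℝ) < n := by exact_mod_cast h
    have h3 : 0 < 1 / (n:ℝ) := by positivity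
    linarith

lemma summable_Li_terms (m : ℕ) {x : ℝ} (hx : |x| < 1) :
    Summable fun n : ℕ => x ^ (n + 1) / (n + 1 : ℝ) ^ m := by
  apply Summable.of_norm_bounded (summable_geometric_of_lt_one (abs_nonneg x) hx)
  intro n
  rw [norm_div, norm_pow, norm_pow]
  have h1 : (1:ℝ) ≤ (n + 1 : ℝ) ^ m := one_le_pow₀ (by linarith [Nat.cast_nonneg (α := ℝ) n])
  have : ‖(n + 1 : ℝ)‖ ^ m = (n + 1 : ℝ) ^ m := by
    rw [Real.norm_eq_abs, abs_of_pos (by positivity)]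
  rw [this]
  calc ‖x‖ ^ (n+1) / (n + 1 : ℝ) ^ m ≤ ‖x‖ ^ (n+1) / 1 := by
        apply div_le_div_of_nonneg_left (by positivity) one_pos h1
    _ = |x| ^ (n+1) := by rw [div_one, Real.norm_eq_abs]
    _ ≤ |x| ^ n := pow_le_pow_of_le_one (abs_nonneg x) hx.le (by omega)

lemma hasSum_Li (m : ℕ) {x : ℝ} (hx : |x| < 1) :
    HasSum (fun n : ℕ => x ^ (n + 1) / (n + 1 : ℝ) ^ m) (Li m x) :=
  (summable_Li_terms m hx).hasSum

lemma Li_one_eq {x : ℝ} (hx : |x| < 1) : Li 1 x = -Real.log (1 - x) := by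
  have h := hasSum_pow_div_log_of_abs_lt_one hx
  have h2 : HasSum (fun n : ℕ => x ^ (n + 1) / (n + 1 : ℝ) ^ 1) (-Real.log (1 - x)) := by
    simpa using h
  exact h2.tsum_eq

lemma hasDerivAt_Li (m : ℕ) {x : ℝ} (hx : |x| < 1) :
    HasDerivAt (Li (m+1)) (∑' n : ℕ, x ^ n / (n + 1 : ℝ) ^ m) x := by
  set r : ℝ := (1 + |x|) / 2 with hr
  have hr0 : 0 ≤ r := by positivity
  have hxr : |x| < r := by rw [hr]; linarith
  have hr1 : r < 1 := by rw [hr]; linarith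
  have hopen : IsOpen (Set.Ioo (-r) r) := isOpen_Ioo
  have hconn : IsPreconnected (Set.Ioo (-r) r) := (convex_Ioo _ _).isPreconnected
  have hxmem : x ∈ Set.Ioo (-r) r := by
    constructor <;> [linarith [neg_abs_le x]; linarith [le_abs_self x]]
  have key := hasDerivAt_tsum_of_isPreconnected
    (u := fun n : ℕ => r ^ n)
    (g := fun (n : ℕ) (y : ℝ) => y ^ (n + 1) / (n + 1 : ℝ) ^ (m+1))
    (g' := fun (n : ℕ) (y : ℝ) => y ^ n / (n + 1 : ℝ) ^ m)
    (summable_geometric_of_lt_one hr0 hr1) hopen hconn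
    (fun n y _ => by
      have h := (hasDerivAt_pow (n+1) y).div_const ((n + 1 : ℝ) ^ (m+1))
      refine h.congr_deriv ?_
      have hne : (n + 1 : ℝ) ≠ 0 := by positivity
      push_cast
      rw [pow_succ]
      field_simp)
    (fun n y hy => by
      have h1 : (1:ℝ) ≤ (n + 1 : ℝ) ^ m := one_le_pow₀ (by linarith [Nat.cast_nonneg (α := ℝ) n])
      have hyr : |y| ≤ r := by
        rw [abs_le]; exact ⟨hy.1.le, hy.2.le⟩
      rw [Real.norm_eq_abs, abs_div, abs_pow]
      have : |(n + 1 : ℝ) ^ m| = (n + 1 : ℝ) ^ m := abs_of_pos (by positivity)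
      rw [this]
      calc |y| ^ n / (n + 1 : ℝ) ^ m ≤ |y| ^ n / 1 :=
            div_le_div_of_nonneg_left (by positivity) one_pos h1
        _ = |y| ^ n := div_one _
        _ ≤ r ^ n := pow_le_pow_left₀ (abs_nonneg y) hyr n)
    hxmem (summable_Li_terms (m+1) hx) hxmem
  exact key

lemma tsum_shift_eq {m : ℕ} {x : ℝ} (hx : |x| < 1) (hx0 : x ≠ 0) :
    ∑' n : ℕ, x ^ n / (n + 1 : ℝ) ^ m = Li m x / x := by
  rw [eq_div_iff hx0, Li, ← tsum_mul_right]
  congr 1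
  funext n
  rw [div_mul_eq_mul_div, mul_comm, ← pow_succ']

lemma hasDerivAt_Li' (m : ℕ) {x : ℝ} (hx : |x| < 1) (hx0 : x ≠ 0) :
    HasDerivAt (Li (m+1)) (Li m x / x) x := by
  rw [← tsum_shift_eq hx hx0]; exact hasDerivAt_Li m hx

lemma H2_eq_range (n : ℕ) : H 2 n = ∑ k ∈ Finset.range n, 1 / ((k:ℝ)+1) ^ 2 := by
  rw [H, ← Finset.Ico_add_one_right_eq_Icc, Finset.sum_Ico_eq_sum_range]
  simp only [Nat.succ_sub_one, Nat.add_sub_cancel]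
  refine Finset.sum_congr rfl fun k _ => ?_
  push_cast
  ring_nf

lemma tsum_H2_mul {x : ℝ} (hx0 : 0 ≤ x) (hx1 : x < 1) :
    ∑' n : ℕ, H 2 (n+1) * x ^ (n+1) = Li 2 x * (1 - x)⁻¹ := by
  have hxabs : |x| < 1 := by rwa [abs_of_nonneg hx0]
  have hf : Summable fun n : ℕ => ‖x ^ (n+1) / (n+1:ℝ)^2‖ := (summable_Li_terms 2 hxabs).abs
  have hg : Summable fun n : ℕ => ‖x ^ n‖ := by
    simpa [Real.norm_eq_abs, abs_pow, abs_of_nonneg hx0] using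
      (summable_geometric_of_lt_one hx0 hx1).abs
  have key := tsum_mul_tsum_eq_tsum_sum_range_of_summable_norm hf hg
  rw [tsum_geometric_of_lt_one hx0 hx1] at key
  rw [show Li 2 x * (1-x)⁻¹ = (∑' n : ℕ, x ^ (n + 1) / (n + 1 : ℝ) ^ 2) * (1-x)⁻¹ from rfl, key]
  refine tsum_congr fun n => ?_
  rw [H2_eq_range]
  rw [Finset.sum_mul]
  refine Finset.sum_congr rfl fun k hk => ?_
  have hkn : k ≤ n := by simpa using Nat.lt_succ_iff.mp (Finset.mem_range.mp hk)
  have : x ^ (k+1) * x ^ (n-k) = x ^ (n+1) := by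
    rw [← pow_add]; congr 1; omega
  rw [div_mul_eq_mul_div, div_mul_eq_mul_div, one_mul, this]

noncomputable def G (x : ℝ) : ℝ := ∑' n : ℕ, H 2 (n+1) / ((n:ℝ)+1) * x ^ (n+1)

lemma summable_G_terms {x : ℝ} (hx : |x| < 1) :
    Summable fun n : ℕ => H 2 (n+1) / ((n:ℝ)+1) * x ^ (n+1) := by
  apply Summable.of_norm_bounded
    ((summable_geometric_of_lt_one (abs_nonneg x) hx).mul_left 2)
  intro n
  rw [Real.norm_eq_abs, abs_mul, abs_pow]
  have h1 : |H 2 (n+1) / ((n:ℝ)+1)| ≤ 2 := by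
    rw [abs_div, abs_of_nonneg (H2_nonneg _), abs_of_pos (by positivity)]
    calc H 2 (n+1) / ((n:ℝ)+1) ≤ 2 / 1 := by
          apply div_le_div₀ (by norm_num) (H2_le_two _) one_pos (by linarith [Nat.cast_nonneg (α := ℝ) n])
      _ = 2 := by norm_num
  calc |H 2 (n+1) / ((n:ℝ)+1)| * |x| ^ (n+1) ≤ 2 * |x| ^ (n+1) := by
        apply mul_le_mul_of_nonneg_right h1 (by positivity)
    _ ≤ 2 * |x| ^ n := by
        have := pow_le_pow_of_le_one (abs_nonneg x) hx.le (Nat.le_succ n)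
        simp only [Nat.succ_eq_add_one] at this
        linarith

lemma summable_Gderiv_terms {x : ℝ} (hx : |x| < 1) :
    Summable fun n : ℕ => H 2 (n+1) * x ^ n := by
  apply Summable.of_norm_bounded
    ((summable_geometric_of_lt_one (abs_nonneg x) hx).mul_left 2)
  intro n
  rw [Real.norm_eq_abs, abs_mul, abs_pow]
  apply mul_le_mul_of_nonneg_right _ (by positivity)
  rw [abs_of_nonneg (H2_nonneg _)]
  exact H2_le_two _

lemma hasDerivAt_G {x : ℝ} (hx : |x| < 1) :
    HasDerivAt G (∑' n : ℕ, H 2 (n+1) * x ^ n) x := by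
  set r : ℝ := (1 + |x|) / 2 with hr
  have hr0 : 0 ≤ r := by positivity
  have hxr : |x| < r := by rw [hr]; linarith
  have hr1 : r < 1 := by rw [hr]; linarith
  exact hasDerivAt_tsum_of_isPreconnected
    (u := fun n : ℕ => 2 * r ^ n)
    (g := fun (n : ℕ) (y : ℝ) => H 2 (n+1) / ((n:ℝ)+1) * y ^ (n+1))
    (g' := fun (n : ℕ) (y : ℝ) => H 2 (n+1) * y ^ n)
    ((summable_geometric_of_lt_one hr0 hr1).mul_left 2) isOpen_Ioo
    (convex_Ioo _ _).isPreconnected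
    (fun n y _ => by
      have h := ((hasDerivAt_pow (n+1) y).const_mul (H 2 (n+1) / ((n:ℝ)+1)))
      refine h.congr_deriv ?_
      have hne : ((n:ℝ) + 1) ≠ 0 := by positivity
      push_cast
      field_simp)
    (fun n y hy => by
      have hyr : |y| ≤ r := by rw [abs_le]; exact ⟨hy.1.le, hy.2.le⟩
      rw [Real.norm_eq_abs, abs_mul, abs_pow, abs_of_nonneg (H2_nonneg _)]
      calc H 2 (n+1) * |y| ^ n ≤ 2 * |y| ^ n :=
            mul_le_mul_of_nonneg_right (H2_le_two _) (by positivity)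
        _ ≤ 2 * r ^ n := by
            have := pow_le_pow_left₀ (abs_nonneg y) hyr n
            linarith)
    (show x ∈ Set.Ioo (-r) r from ⟨by linarith [neg_abs_le x], by linarith [le_abs_self x]⟩)
    (summable_G_terms hx)
    (show x ∈ Set.Ioo (-r) r from ⟨by linarith [neg_abs_le x], by linarith [le_abs_self x]⟩)

noncomputable def F (x : ℝ) : ℝ :=
  -Li 2 x * Real.log (1 - x) - Real.log x * (Real.log (1 - x)) ^ 2
    - 2 * Real.log (1 - x) * Li 2 (1 - x) + 2 * Li 3 (1 - x)
    - 2 * Li 3 1 + Li 3 x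

lemma hasDerivAt_F {x : ℝ} (hx0 : 0 < x) (hx1 : x < 1) :
    HasDerivAt F (Li 2 x / (x * (1 - x))) x := by
  have h1x0 : 0 < 1 - x := by linarith
  have hxabs : |x| < 1 := by rw [abs_of_pos hx0]; exact hx1
  have hyabs : |1 - x| < 1 := by rw [abs_of_pos h1x0]; linarith
  have hxne : x ≠ 0 := ne_of_gt hx0
  have hyne : (1 : ℝ) - x ≠ 0 := ne_of_gt h1x0
  -- inner function 1 - t
  have hinner : HasDerivAt (fun t : ℝ => 1 - t) (-1) x := by
    simpa using (hasDerivAt_id x).const_sub 1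
  have h2 : HasDerivAt (Li 2) (Li 1 x / x) x := hasDerivAt_Li' 1 hxabs hxne
  have h3 : HasDerivAt (Li 3) (Li 2 x / x) x := hasDerivAt_Li' 2 hxabs hxne
  have h2y : HasDerivAt (fun t => Li 2 (1 - t)) (Li 1 (1-x) / (1-x) * (-1)) x :=
    (hasDerivAt_Li' 1 hyabs hyne).comp x hinner
  have h3y : HasDerivAt (fun t => Li 3 (1 - t)) (Li 2 (1-x) / (1-x) * (-1)) x :=
    (hasDerivAt_Li' 2 hyabs hyne).comp x hinner
  have hlog : HasDerivAt Real.log x⁻¹ x := Real.hasDerivAt_log hxne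
  have hlog1x : HasDerivAt (fun t => Real.log (1 - t)) ((1-x)⁻¹ * (-1)) x :=
    (Real.hasDerivAt_log hyne).comp x hinner
  have t1 : HasDerivAt (fun t => -Li 2 t * Real.log (1 - t))
      (-(Li 1 x / x) * Real.log (1-x) + -Li 2 x * ((1-x)⁻¹ * (-1))) x := h2.neg.mul hlog1x
  have t2 : HasDerivAt (fun t => Real.log t * (Real.log (1 - t)) ^ 2)
      (x⁻¹ * (Real.log (1-x))^2
        + Real.log x * ((2:ℕ) * (Real.log (1-x)) ^ 1 * ((1-x)⁻¹ * (-1)))) x :=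
    hlog.mul (hlog1x.pow 2)
  have t3 : HasDerivAt (fun t => 2 * Real.log (1 - t) * Li 2 (1 - t))
      (2 * ((1-x)⁻¹ * (-1)) * Li 2 (1-x)
        + 2 * Real.log (1-x) * (Li 1 (1-x) / (1-x) * (-1))) x :=
    (hlog1x.const_mul 2).mul h2y
  have t4 : HasDerivAt (fun t => 2 * Li 3 (1 - t)) (2 * (Li 2 (1-x) / (1-x) * (-1))) x :=
    h3y.const_mul 2
  have total := ((((t1.sub t2).sub t3).add t4).sub_const (2 * Li 3 1)).add h3
  have hF : HasDerivAt F
      (-(Li 1 x / x) * Real.log (1-x) + -Li 2 x * ((1-x)⁻¹ * (-1))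
        - (x⁻¹ * (Real.log (1-x))^2
          + Real.log x * ((2:ℕ) * (Real.log (1-x)) ^ 1 * ((1-x)⁻¹ * (-1))))
        - (2 * ((1-x)⁻¹ * (-1)) * Li 2 (1-x)
          + 2 * Real.log (1-x) * (Li 1 (1-x) / (1-x) * (-1)))
        + 2 * (Li 2 (1-x) / (1-x) * (-1)) + Li 2 x / x) x := total
  have hLi1x : Li 1 x = -Real.log (1 - x) := Li_one_eq hxabs
  have hLi1y : Li 1 (1 - x) = -Real.log x := by
    have := Li_one_eq hyabs
    rwa [show (1 : ℝ) - (1 - x) = x by ring] at this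
  convert hF using 1
  rw [hLi1x, hLi1y]
  push_cast
  field_simp
  ring

lemma hasDerivAt_G' {x : ℝ} (hx0 : 0 < x) (hx1 : x < 1) :
    HasDerivAt G (Li 2 x / (x * (1 - x))) x := by
  have hxabs : |x| < 1 := by rw [abs_of_pos hx0]; exact hx1
  have h := hasDerivAt_G hxabs
  have hxne : x ≠ 0 := ne_of_gt hx0
  have hyne : (1:ℝ) - x ≠ 0 := ne_of_gt (by linarith)
  have heq : ∑' n : ℕ, H 2 (n+1) * x ^ n = Li 2 x / (x * (1 - x)) := by
    have h1 : (∑' n : ℕ, H 2 (n+1) * x ^ n) * x = Li 2 x * (1 - x)⁻¹ := by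
      rw [← tsum_mul_right, ← tsum_H2_mul hx0.le hx1]
      exact tsum_congr fun n => by rw [mul_assoc, ← pow_succ]
    field_simp at h1 ⊢
    linarith [h1]
  rwa [heq] at h

lemma G_sub_F_const {a b : ℝ} (ha : 0 < a) (hab : a ≤ b) (hb1 : b < 1) :
    G b - F b = G a - F a := by
  rcases eq_or_lt_of_le hab with rfl | hab'
  · rfl
  have hderiv : ∀ y ∈ Set.Icc a b, HasDerivAt (fun t => G t - F t) 0 y := by
    intro y hy
    have hy0 : 0 < y := lt_of_lt_of_le ha hy.1
    have hy1 : y < 1 := lt_of_le_of_lt hy.2 hb1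
    exact ((hasDerivAt_G' hy0 hy1).sub (hasDerivAt_F hy0 hy1)).congr_deriv (sub_self _)
  have key := constant_of_derivWithin_zero (f := fun t => G t - F t) (a := a) (b := b)
    (fun y hy => (hderiv y hy).differentiableAt.differentiableWithinAt)
    (fun y hy => ((hderiv y (Set.mem_Icc_of_Ico hy)).hasDerivWithinAt).derivWithin
      (uniqueDiffOn_Icc hab' y (Set.mem_Icc_of_Ico hy)))
  exact key b (Set.right_mem_Icc.mpr hab)

lemma summable_inv_sq : Summable (fun n : ℕ => 1 / ((n:ℝ)+1) ^ 2) := by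
  have h : Summable (fun n : ℕ => 1 / (n:ℝ) ^ 2) :=
    Real.summable_one_div_nat_pow.mpr one_lt_two
  have h2 := (summable_nat_add_iff 1).mpr h
  refine h2.congr fun n => ?_
  push_cast
  ring

lemma Li_continuousOn {m : ℕ} (hm : 2 ≤ m) : ContinuousOn (Li m) (Set.Icc 0 1) := by
  apply continuousOn_tsum (u := fun n : ℕ => 1 / ((n:ℝ)+1) ^ 2)
    (fun i => ((continuous_pow (i+1)).div_const _).continuousOn) summable_inv_sq
  intro n x hx
  rw [Real.norm_eq_abs, abs_div, abs_pow, abs_of_pos (show (0:ℝ) < (n+1:ℝ)^m by positivity)]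
  have hx1 : |x| ≤ 1 := by rw [abs_le]; exact ⟨by linarith [hx.1], hx.2⟩
  have hp : |x| ^ (n+1) ≤ 1 := pow_le_one₀ (abs_nonneg x) hx1
  have hmono : ((n:ℝ)+1) ^ 2 ≤ ((n:ℝ)+1) ^ m :=
    pow_le_pow_right₀ (by linarith [Nat.cast_nonneg (α := ℝ) n]) hm
  calc |x| ^ (n+1) / (n+1:ℝ) ^ m ≤ 1 / (n+1:ℝ) ^ m := by gcongr
    _ ≤ 1 / ((n:ℝ)+1) ^ 2 := by
        apply div_le_div_of_nonneg_left one_pos.le (by positivity) hmono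

lemma tendsto_one_sub : Tendsto (fun a : ℝ => 1 - a) (𝓝[>] (0:ℝ)) (𝓝[Set.Icc (0:ℝ) 1] 1) := by
  rw [tendsto_nhdsWithin_iff]
  constructor
  · have : Tendsto (fun a : ℝ => 1 - a) (𝓝 0) (𝓝 1) := by
      have h := Continuous.tendsto (by continuity : Continuous fun a : ℝ => 1 - a) 0
      simpa using h
    exact this.mono_left nhdsWithin_le_nhds
  · filter_upwards [Ioo_mem_nhdsGT_of_mem (Set.mem_Ico.mpr ⟨le_refl (0:ℝ), one_pos⟩)] with a ha
    exact ⟨by linarith [ha.2], by linarith [ha.1]⟩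

lemma tendsto_id_Icc : Tendsto (fun a : ℝ => a) (𝓝[>] (0:ℝ)) (𝓝[Set.Icc (0:ℝ) 1] 0) := by
  rw [tendsto_nhdsWithin_iff]
  constructor
  · exact tendsto_id.mono_left nhdsWithin_le_nhds
  · filter_upwards [Ioo_mem_nhdsGT_of_mem (Set.mem_Ico.mpr ⟨le_refl (0:ℝ), one_pos⟩)] with a ha
    exact ⟨ha.1.le, ha.2.le⟩

lemma Li_zero (m : ℕ) : Li m 0 = 0 := by
  simp [Li]

lemma tendsto_Li_one_sub {m : ℕ} (hm : 2 ≤ m) :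
    Tendsto (fun a : ℝ => Li m (1 - a)) (𝓝[>] (0:ℝ)) (𝓝 (Li m 1)) := by
  have hc : ContinuousWithinAt (Li m) (Set.Icc 0 1) 1 :=
    (Li_continuousOn hm) 1 (Set.mem_Icc.mpr ⟨zero_le_one, le_refl 1⟩)
  exact hc.tendsto.comp tendsto_one_sub

lemma tendsto_Li_zero {m : ℕ} (hm : 2 ≤ m) :
    Tendsto (fun a : ℝ => Li m a) (𝓝[>] (0:ℝ)) (𝓝 0) := by
  have hc : ContinuousWithinAt (Li m) (Set.Icc 0 1) 0 :=
    (Li_continuousOn hm) 0 (Set.mem_Icc.mpr ⟨le_refl 0, zero_le_one⟩)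
  have := hc.tendsto.comp tendsto_id_Icc
  simpa [Li_zero, Function.comp_def] using this

lemma tendsto_log_one_sub : Tendsto (fun a : ℝ => Real.log (1 - a)) (𝓝[>] (0:ℝ)) (𝓝 0) := by
  have hc : ContinuousAt (fun a : ℝ => Real.log (1 - a)) 0 := by
    have h1 : ContinuousAt (fun a : ℝ => 1 - a) 0 := by fun_prop
    have h2 : ContinuousAt Real.log ((fun a : ℝ => 1 - a) 0) := by
      simp only [sub_zero]; exact Real.continuousAt_log one_ne_zero
    exact h2.comp h1
  have := hc.tendsto.mono_left (nhdsWithin_le_nhds (s := Set.Ioi (0:ℝ)))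
  simpa using this

lemma abs_log_one_sub_le {a : ℝ} (ha : 0 < a) (ha2 : a < 1/2) :
    |Real.log (1 - a)| ≤ 2 * a := by
  have h1 : (0:ℝ) < 1 - a := by linarith
  have h2 : Real.log (1 - a) ≤ 0 := Real.log_nonpos h1.le (by linarith)
  rw [abs_of_nonpos h2, ← Real.log_inv]
  have h3 := Real.log_le_sub_one_of_pos (inv_pos.mpr h1)
  have h4 : (1 - a)⁻¹ - 1 ≤ 2 * a := by
    rw [inv_eq_one_div, div_sub' (ne_of_gt h1)]
    rw [div_le_iff₀ h1]
    nlinarith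
  linarith

lemma tendsto_logterm : Tendsto (fun a : ℝ => Real.log a * (Real.log (1 - a)) ^ 2)
    (𝓝[>] (0:ℝ)) (𝓝 0) := by
  have h0 : Tendsto (fun a : ℝ => Real.log a * a ^ (2:ℝ)) (𝓝[>] (0:ℝ)) (𝓝 0) :=
    tendsto_log_mul_rpow_nhdsGT_zero (by norm_num : (0:ℝ) < 2)
  have h1 : Tendsto (fun a : ℝ => 4 * |Real.log a * a ^ (2:ℝ)|) (𝓝[>] (0:ℝ)) (𝓝 0) := by
    have := (h0.abs).const_mul (4:ℝ)
    simpa using this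
  apply squeeze_zero_norm' _ h1
  filter_upwards [Ioo_mem_nhdsGT_of_mem
    (show (0:ℝ) ∈ Set.Ico (0:ℝ) (1/2:ℝ) from Set.mem_Ico.mpr ⟨le_refl (0:ℝ), by norm_num⟩)]
    with a ha
  obtain ⟨ha0, ha2⟩ := ha
  have hb := abs_log_one_sub_le ha0 ha2
  have hrpow : a ^ (2:ℝ) = a ^ 2 := by
    rw [show (2:ℝ) = ((2:ℕ):ℝ) by norm_num, Real.rpow_natCast]
  have hr : 4 * |Real.log a * a ^ (2:ℝ)| = 4 * |Real.log a| * a ^ 2 := by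
    rw [hrpow, abs_mul, abs_of_pos (show (0:ℝ) < a ^ 2 by positivity)]; ring
  rw [Real.norm_eq_abs, abs_mul, hr, abs_pow]
  have hsq : |Real.log (1 - a)| ^ 2 ≤ (2 * a) ^ 2 :=
    pow_le_pow_left₀ (abs_nonneg _) hb 2
  nlinarith [abs_nonneg (Real.log a), sq_nonneg a]

lemma tendsto_G_zero : Tendsto G (𝓝[>] (0:ℝ)) (𝓝 0) := by
  have hlim : Tendsto (fun a : ℝ => 2 * a * (1 - a)⁻¹) (𝓝[>] (0:ℝ)) (𝓝 0) := by
    have hc : ContinuousAt (fun a : ℝ => 2 * a * (1 - a)⁻¹) 0 := by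
      apply ContinuousAt.mul
      · exact (continuous_const.mul continuous_id).continuousAt
      · exact ContinuousAt.inv₀ (continuous_const.sub continuous_id).continuousAt (by norm_num)
    have := hc.tendsto.mono_left (nhdsWithin_le_nhds (s := Set.Ioi (0:ℝ)))
    simpa using this
  apply squeeze_zero_norm' _ hlim
  filter_upwards [Ioo_mem_nhdsGT_of_mem (Set.mem_Ico.mpr ⟨le_refl (0:ℝ), one_pos⟩)] with a ha
  obtain ⟨ha0, ha1⟩ := ha
  have haabs : |a| < 1 := by rw [abs_of_pos ha0]; exact ha1
  have hsum1 := summable_G_terms haabs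
  have hsum2 : Summable (fun n : ℕ => 2 * a * a ^ n) :=
    (summable_geometric_of_lt_one ha0.le ha1).mul_left (2 * a)
  have hG0 : 0 ≤ G a := tsum_nonneg fun n => by
    have := H2_nonneg (n+1); positivity
  have hGle : G a ≤ 2 * a * (1 - a)⁻¹ := by
    rw [G, show 2 * a * (1-a)⁻¹ = ∑' n : ℕ, 2 * a * a ^ n by
      rw [tsum_mul_left, tsum_geometric_of_lt_one ha0.le ha1]]
    apply Summable.tsum_le_tsum _ hsum1 hsum2
    intro n
    have hb : H 2 (n+1) / ((n:ℝ)+1) ≤ 2 := by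
      rw [div_le_iff₀ (by positivity)]
      calc H 2 (n+1) ≤ 2 := H2_le_two _
        _ ≤ 2 * ((n:ℝ)+1) := by nlinarith [Nat.cast_nonneg (α := ℝ) n]
    calc H 2 (n+1) / ((n:ℝ)+1) * a ^ (n+1) ≤ 2 * a ^ (n+1) := by
          apply mul_le_mul_of_nonneg_right hb (by positivity)
      _ = 2 * a * a ^ n := by ring
  rw [Real.norm_eq_abs, abs_of_nonneg hG0]
  exact hGle

lemma tendsto_F_zero : Tendsto F (𝓝[>] (0:ℝ)) (𝓝 0) := by
  have hA := tendsto_Li_zero (le_refl 2)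
  have hB := tendsto_log_one_sub
  have hC := tendsto_logterm
  have hD2 := tendsto_Li_one_sub (le_refl 2)
  have hD3 := tendsto_Li_one_sub (m := 3) (by norm_num)
  have hE := tendsto_Li_zero (m := 3) (by norm_num)
  have total := (((((hA.neg.mul hB).sub hC).sub ((hB.const_mul 2).mul hD2)).add
    (hD3.const_mul 2)).sub (tendsto_const_nhds :
      Tendsto (fun _ : ℝ => 2 * Li 3 1) (𝓝[>] (0:ℝ)) (𝓝 (2 * Li 3 1)))).add hE
  have heq : (-0 * 0 - 0 - 2 * 0 * Li 2 1 + 2 * Li 3 1 - 2 * Li 3 1 + 0 : ℝ) = 0 := by ring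
  rw [heq] at total
  exact total.congr fun a => rfl

lemma G_eq_F {x : ℝ} (hx0 : 0 < x) (hx1 : x < 1) : G x = F x := by
  have hconst : Tendsto (fun a : ℝ => G a - F a) (𝓝[>] (0:ℝ)) (𝓝 (G x - F x)) := by
    have hev : (fun _ : ℝ => G x - F x) =ᶠ[𝓝[>] (0:ℝ)] fun a => G a - F a := by
      filter_upwards [Ioo_mem_nhdsGT_of_mem (Set.mem_Ico.mpr ⟨le_refl (0:ℝ), hx0⟩)] with a ha
      exact G_sub_F_const ha.1 ha.2.le hx1
    exact Tendsto.congr' hev tendsto_const_nhds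
  have hzero : Tendsto (fun a : ℝ => G a - F a) (𝓝[>] (0:ℝ)) (𝓝 0) := by
    simpa using tendsto_G_zero.sub tendsto_F_zero
  have := tendsto_nhds_unique hconst hzero
  linarith

theorem stmt6 (x : ℝ) (hx0 : 0 < x) (hx1 : x < 1) :
    Filter.Tendsto (fun N => ∑ n ∈ Finset.Icc 1 N, H 2 n / (n : ℝ) * x ^ n)
      Filter.atTop
      (nhds (-Li 2 x * Real.log (1 - x) - Real.log x * (Real.log (1 - x)) ^ 2
        - 2 * Real.log (1 - x) * Li 2 (1 - x) + 2 * Li 3 (1 - x)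
        - 2 * Li 3 1 + Li 3 x)) := by
  have hxabs : |x| < 1 := by rw [abs_of_pos hx0]; exact hx1
  have htend := (summable_G_terms hxabs).hasSum.tendsto_sum_nat
  have heq : ∀ N, ∑ n ∈ Finset.Icc 1 N, H 2 n / (n:ℝ) * x ^ n
      = ∑ i ∈ Finset.range N, H 2 (i+1) / ((i:ℝ)+1) * x ^ (i+1) := by
    intro N
    rw [← Finset.Ico_add_one_right_eq_Icc, Finset.sum_Ico_eq_sum_range]
    simp only [Nat.add_sub_cancel]
    refine Finset.sum_congr rfl fun i _ => ?_
    rw [add_comm 1 i]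
    push_cast
    ring
  have final : Tendsto (fun N => ∑ n ∈ Finset.Icc 1 N, H 2 n / (n:ℝ) * x ^ n)
      atTop (𝓝 (G x)) := htend.congr fun N => (heq N).symm
  rw [G_eq_F hx0 hx1] at final
  exact final
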